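/- Given Farey-regular n-simplexes conv(v₀,…,vₙ) and conv(w₀,…,wₙ) in ℝⁿ with den(vᵢ) = den(wᵢ) for all i, there is a unique map γ ∈ GL(n,ℤ) ⋉ ℤⁿ with γ(vᵢ) = wᵢ for each i = 0,…,n. -/

import Mathlib

open scoped BigOperators

noncomputable section

/-- Embedding of a rational point of ℚⁿ into ℝⁿ. -/
def toR {n : ℕ} (x : Fin n → ℚ) : Fin n → ℝ := fun i => (x i : ℝ)

/-- Least common denominator of a rational point. -/
def den {n : ℕ} (x : Fin n → ℚ) : ℕ := Finset.univ.lcm fun i => (x i).den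

/-- Homogeneous correspondent x̃ = (den(x)·x, den(x)) ∈ ℤ^{n+1}. -/
def homog {n : ℕ} (x : Fin n → ℚ) : Fin (n + 1) → ℤ :=
  Fin.snoc (fun i => ((den x : ℚ) * x i).num) (den x)

/-- A rational d-simplex, given by its vertices, is Farey-regular if the vertices are
affinely independent and their homogeneous correspondents extend to a ℤ-basis of ℤ^{n+1}. -/
def IsFareyRegular {n d : ℕ} (v : Fin (d + 1) → Fin n → ℚ) : Prop :=
  AffineIndependent ℝ (fun i => toR (v i)) ∧
  ∃ (b : Module.Basis (Fin (n + 1)) ℤ (Fin (n + 1) → ℤ)) (ι : Fin (d + 1) → Fin (n + 1)),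
    Function.Injective ι ∧ ∀ i, b (ι i) = homog (v i)

/-- A rational segment conv(a,b) is Farey-regular. -/
def SegRegular {n : ℕ} (a b : Fin n → ℚ) : Prop := IsFareyRegular ![a, b]

/-- Maps in GL(n,ℤ) ⋉ ℤⁿ : x ↦ Mx + t with M an integer matrix with det ±1. -/
def IsUnimodularAffine {n : ℕ} (γ : (Fin n → ℝ) → Fin n → ℝ) : Prop :=
  ∃ (M : Matrix (Fin n) (Fin n) ℤ) (t : Fin n → ℤ), IsUnit M.det ∧
    ∀ x, γ x = fun i => (∑ j, (M i j : ℝ) * x j) + (t i : ℝ)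

/-- A rational affine space: an intersection of rational affine hyperplanes of ℝⁿ. -/
def IsRatAffineSpace {n : ℕ} (F : Set (Fin n → ℝ)) : Prop :=
  ∃ (ι : Type) (p : ι → Fin n → ℚ) (c : ι → ℚ), (∀ i, p i ≠ 0) ∧
    F = ⋂ i, {z | (∑ j, (p i j : ℝ) * z j) = (c i : ℝ)}

/-- Affine dimension of a subset of ℝⁿ. -/
def affDim {n : ℕ} (F : Set (Fin n → ℝ)) : ℕ :=
  Module.finrank ℝ (vectorSpan ℝ F)

/-- d_F: least denominator of a rational point of F. -/
def dF {n : ℕ} (F : Set (Fin n → ℝ)) : ℕ :=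
  sInf {d | ∃ v : Fin n → ℚ, toR v ∈ F ∧ den v = d}

/-- c_F: least denominator of a rational point v such that conv(v,v₀,…,v_e) is a
Farey-regular (e+1)-simplex for some v₀,…,v_e ∈ F ∩ ℚⁿ (e = dim F < n); c_F = 1 if dim F = n. -/
def cF {n : ℕ} (F : Set (Fin n → ℝ)) : ℕ :=
  if affDim F = n then 1 else
  sInf {c | ∃ (v : Fin n → ℚ) (w : Fin (affDim F + 1) → Fin n → ℚ),
    (∀ i, toR (w i) ∈ F) ∧ IsFareyRegular (Fin.cons v w) ∧ den v = c}

/-- Euclidean distance on ℝⁿ. -/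
def eudist {n : ℕ} (x y : Fin n → ℝ) : ℝ := Real.sqrt (∑ i, (x i - y i) ^ 2)

/-- The sequence a = x₀, x₁, …, x_{u+1} = b of consecutive vertices of the
Hirzebruch–Jung triangulation of the rational segment conv(a,b): each x_{i+1} is the
farthest rational point z from xᵢ in conv(a,b) such that conv(xᵢ,z) is Farey-regular. -/
def IsHJSeq {n : ℕ} (a b : Fin n → ℚ) {u : ℕ} (x : Fin (u + 2) → Fin n → ℚ) : Prop :=
  x 0 = a ∧ x (Fin.last (u + 1)) = b ∧
  ∀ i : Fin (u + 1),
    toR (x i.succ) ∈ segment ℝ (toR a) (toR b) ∧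
    SegRegular (x i.castSucc) (x i.succ) ∧
    ∀ z : Fin n → ℚ, toR z ∈ segment ℝ (toR a) (toR b) →
      SegRegular (x i.castSucc) z →
      eudist (toR z) (toR (x i.castSucc)) ≤ eudist (toR (x i.succ)) (toR (x i.castSucc))

/-- A regular triangulation of the rational segment conv(a,b), described by its
consecutive vertices a = y₀, …, y_{k+1} = b: consecutive 1-simplexes are Farey-regular. -/
def IsRegTriSeq {n : ℕ} (a b : Fin n → ℚ) {k : ℕ} (y : Fin (k + 2) → Fin n → ℚ) : Prop :=
  y 0 = a ∧ y (Fin.last (k + 1)) = b ∧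
  ∀ i : Fin (k + 1),
    toR (y i.succ) ∈ segment ℝ (toR (y i.castSucc)) (toR b) ∧
    SegRegular (y i.castSucc) (y i.succ)

/-- A rational half-line with rational origin v: {v + t(w - v) : t ≥ 0} for some rational w ≠ v. -/
def IsRatHalfLine {n : ℕ} (H : Set (Fin n → ℝ)) (v : Fin n → ℚ) : Prop :=
  ∃ w : Fin n → ℚ, w ≠ v ∧
    H = {P | ∃ t : ℝ, 0 ≤ t ∧ P = fun i => toR v i + t * (toR w i - toR v i)}


lemma den_ne_zero {n : ℕ} (x : Fin n → ℚ) : den x ≠ 0 := by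
  intro h
  rw [den, Finset.lcm_eq_zero_iff] at h
  simp only [Set.mem_image, Finset.mem_coe, Finset.mem_univ, true_and] at h
  obtain ⟨i, hi⟩ := h
  exact (x i).den_nz hi

lemma num_mul_den {n : ℕ} (x : Fin n → ℚ) (j : Fin n) :
    ((((den x : ℚ)) * x j).num : ℚ) = (den x : ℚ) * x j := by
  obtain ⟨c, hc⟩ : (x j).den ∣ den x := Finset.dvd_lcm (Finset.mem_univ j)
  set q := x j
  have hq : (q.den : ℚ) ≠ 0 := by exact_mod_cast q.den_nz
  have hden : ((q.den : ℚ)) * q = q.num := by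
    have h0 : q = (q.num : ℚ) / q.den := (Rat.num_div_den q).symm
    rw [eq_div_iff hq] at h0
    rw [mul_comm]; exact h0
  have h2 : ((den x : ℕ) : ℚ) * q = ((c * q.num : ℤ) : ℚ) := by
    rw [hc]; push_cast; rw [mul_comm (q.den:ℚ) (c:ℚ), mul_assoc, hden]
  rw [h2, Rat.num_intCast]

lemma homog_castSucc {n : ℕ} (x : Fin n → ℚ) (j : Fin n) :
    homog x j.castSucc = ((den x : ℚ) * x j).num := by
  simp [homog]

lemma homog_last {n : ℕ} (x : Fin n → ℚ) :
    homog x (Fin.last n) = den x := by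
  simp [homog]

/-- expansion of a linear endomorphism of ℤ^{n+1} in coordinates -/
lemma lin_expand {n : ℕ} (S : (Fin (n+1) → ℤ) →ₗ[ℤ] (Fin (n+1) → ℤ))
    (x : Fin (n+1) → ℤ) (i' : Fin (n+1)) :
    S x i' = ∑ k, x k * S (Pi.single k 1) i' := by
  have h2 : ∀ k : Fin (n+1), (fun j => if k = j then (1:ℤ) else 0) = Pi.single k 1 := by
    intro k; funext j; simp [Pi.single_apply, eq_comm]
  rw [LinearMap.pi_apply_eq_sum_univ S x]
  simp only [Finset.sum_apply, Pi.smul_apply, smul_eq_mul]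
  exact Finset.sum_congr rfl fun k _ => by rw [h2]

lemma lin_expand' {n : ℕ} (S : (Fin (n+1) → ℤ) →ₗ[ℤ] (Fin (n+1) → ℤ))
    (x : Fin (n+1) → ℤ) (i : Fin n) :
    S x i.castSucc =
      (∑ j : Fin n, S (Pi.single j.castSucc 1) i.castSucc * x j.castSucc)
        + S (Pi.single (Fin.last n) 1) i.castSucc * x (Fin.last n) := by
  rw [lin_expand S x i.castSucc, Fin.sum_univ_castSucc
    (f := fun k => x k * S (Pi.single k 1) i.castSucc)]
  congr 1
  · exact Finset.sum_congr rfl fun j _ => mul_comm _ _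
  · exact mul_comm _ _

/-- Given Farey-regular n-simplexes conv(v₀,…,vₙ) and conv(w₀,…,wₙ) in ℝⁿ with
den(vᵢ) = den(wᵢ) for all i, there is a unique γ ∈ GL(n,ℤ) ⋉ ℤⁿ with γ(vᵢ) = wᵢ. -/
theorem unique_unimodular_affine_map {n : ℕ}
    (v w : Fin (n + 1) → Fin n → ℚ)
    (hv : IsFareyRegular v) (hw : IsFareyRegular w)
    (hden : ∀ i, den (v i) = den (w i)) :
    ∃! γ : (Fin n → ℝ) → Fin n → ℝ,
      IsUnimodularAffine γ ∧ ∀ i, γ (toR (v i)) = toR (w i) := by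
  classical
  obtain ⟨hvind, bv0, ιv, hιv, hbv0⟩ := hv
  obtain ⟨hwind, bw0, ιw, hιw, hbw0⟩ := hw
  have hvbij : Function.Bijective ιv := Finite.injective_iff_bijective.mp hιv
  have hwbij : Function.Bijective ιw := Finite.injective_iff_bijective.mp hιw
  set bv := bv0.reindex (Equiv.ofBijective ιv hvbij).symm with hbvdef
  set bw := bw0.reindex (Equiv.ofBijective ιw hwbij).symm with hbwdef
  have hbv : ∀ i, bv i = homog (v i) := fun i => by
    rw [hbvdef, Module.Basis.reindex_apply, Equiv.symm_symm]
    exact hbv0 i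
  have hbw : ∀ i, bw i = homog (w i) := fun i => by
    rw [hbwdef, Module.Basis.reindex_apply, Equiv.symm_symm]
    exact hbw0 i
  set T := bv.equiv bw (Equiv.refl _) with hTdef
  have hT : ∀ i, T (homog (v i)) = homog (w i) := fun i => by
    rw [← hbv i, ← hbw i, hTdef]
    exact bv.equiv_apply i bw (Equiv.refl _)
  -- last coordinate is preserved
  have hlast : ∀ x : Fin (n+1) → ℤ, (T x) (Fin.last n) = x (Fin.last n) := by
    have hcomp : (LinearMap.proj (Fin.last n) :
          (Fin (n+1) → ℤ) →ₗ[ℤ] ℤ).comp (T : (Fin (n+1) → ℤ) →ₗ[ℤ] (Fin (n+1) → ℤ))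
        = LinearMap.proj (Fin.last n) := by
      apply bv.ext
      intro i
      simp only [LinearMap.comp_apply, LinearMap.proj_apply, LinearEquiv.coe_coe]
      rw [hbv i, hT i, homog_last, homog_last, hden i]
    intro x
    have := LinearMap.congr_fun hcomp x
    simpa using this
  have hlast' : ∀ x : Fin (n+1) → ℤ, (T.symm x) (Fin.last n) = x (Fin.last n) := by
    intro x
    have := hlast (T.symm x)
    rw [T.apply_symm_apply] at this
    exact this.symm
  set M : Matrix (Fin n) (Fin n) ℤ :=
    Matrix.of fun i j => T (Pi.single j.castSucc 1) i.castSucc with hMdef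
  set t : Fin n → ℤ := fun i => T (Pi.single (Fin.last n) 1) i.castSucc with htdef
  set M' : Matrix (Fin n) (Fin n) ℤ :=
    Matrix.of fun i j => T.symm (Pi.single j.castSucc 1) i.castSucc with hM'def
  have hform : ∀ (x : Fin (n+1) → ℤ) (i : Fin n),
      T x i.castSucc = (∑ j, M i j * x j.castSucc) + t i * x (Fin.last n) := by
    intro x i
    have := lin_expand' (T : (Fin (n+1) → ℤ) →ₗ[ℤ] (Fin (n+1) → ℤ)) x i
    simpa [hMdef, htdef] using this
  have hMM' : M * M' = 1 := by
    ext i j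
    set u : Fin (n+1) → ℤ := Pi.single j.castSucc 1 with hudef
    have hu := hform (T.symm u) i
    have h2 := hlast' u
    rw [T.apply_symm_apply] at hu
    rw [h2] at hu
    have h0 : u (Fin.last n) = 0 := by
      rw [hudef, Pi.single_apply, if_neg]
      exact (Fin.castSucc_lt_last j).ne'
    rw [h0, mul_zero, add_zero] at hu
    have h1 : u (i.castSucc) = if i = j then 1 else 0 := by
      rw [hudef, Pi.single_apply]
      simp [Fin.castSucc_inj]
    rw [h1] at hu
    rw [Matrix.mul_apply, Matrix.one_apply, hu]
    exact Finset.sum_congr rfl fun k _ => rfl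
  have hdet : IsUnit M.det :=
    IsUnit.of_mul_eq_one M'.det (by rw [← Matrix.det_mul, hMM', Matrix.det_one])
  -- the rational identity at the vertices
  have key : ∀ (k : Fin (n+1)) (i : Fin n),
      (∑ j, (M i j : ℚ) * v k j) + (t i : ℚ) = w k i := by
    intro k i
    have h1 := hform (homog (v k)) i
    rw [show T (homog (v k)) = homog (w k) from hT k] at h1
    have h2 : ((homog (w k) i.castSucc : ℤ) : ℚ)
        = (∑ j, (M i j : ℚ) * ((homog (v k) j.castSucc : ℤ) : ℚ))
          + (t i : ℚ) * ((homog (v k) (Fin.last n) : ℤ) : ℚ) := by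
      rw [h1]; push_cast; ring
    simp only [homog_castSucc, homog_last, num_mul_den] at h2
    push_cast at h2
    have hd : ((den (v k) : ℚ)) ≠ 0 := by
      exact_mod_cast den_ne_zero (v k)
    have hs : (∑ j, (M i j:ℚ) * ((den (v k):ℚ) * v k j))
        = (den (v k):ℚ) * ∑ j, (M i j:ℚ) * v k j := by
      rw [Finset.mul_sum]; exact Finset.sum_congr rfl fun j _ => by ring
    rw [hs, hden k] at h2
    apply mul_left_cancel₀ (a := ((den (w k) : ℚ))) (by rw [← hden k]; exact hd)
    rw [mul_add]
    linear_combination -h2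
  -- construct γ
  refine ⟨fun x => fun i => (∑ j, (M i j : ℝ) * x j) + (t i : ℝ), ⟨⟨M, t, hdet, fun x => rfl⟩, ?_⟩, ?_⟩
  · intro k
    funext i
    have := key k i
    have := congrArg (fun q : ℚ => (q : ℝ)) this
    push_cast at this
    simpa [toR] using this
  · -- uniqueness
    rintro γ' ⟨⟨M₁, t₁, hdet₁, hγ₁⟩, hfix₁⟩
    have hfix : ∀ k, (fun i => (∑ j, (M i j : ℝ) * toR (v k) j) + (t i : ℝ)) = toR (w k) := by
      intro k
      funext i
      have := key k i
      have := congrArg (fun q : ℚ => (q : ℝ)) this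
      push_cast at this
      simpa [toR] using this
    set F₁ : (Fin n → ℝ) →ₗ[ℝ] (Fin n → ℝ) := (M₁.map (Int.cast : ℤ → ℝ)).mulVecLin with hF₁
    set F₂ : (Fin n → ℝ) →ₗ[ℝ] (Fin n → ℝ) := (M.map (Int.cast : ℤ → ℝ)).mulVecLin with hF₂
    have hF₁x : ∀ x, F₁ x = fun i => ∑ j, (M₁ i j : ℝ) * x j := by
      intro x; funext i
      simp [hF₁, Matrix.mulVecLin_apply, Matrix.mulVec, dotProduct, Matrix.map_apply]
    have hF₂x : ∀ x, F₂ x = fun i => ∑ j, (M i j : ℝ) * x j := by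
      intro x; funext i
      simp [hF₂, Matrix.mulVecLin_apply, Matrix.mulVec, dotProduct, Matrix.map_apply]
    -- linear independence of differences
    have hli : LinearIndependent ℝ
        (fun i : {x : Fin (n+1) // x ≠ 0} => toR (v i) - toR (v 0)) := by
      have := (affineIndependent_iff_linearIndependent_vsub ℝ (fun i => toR (v i)) 0).mp hvind
      simpa [vsub_eq_sub] using this
    have hcard : Fintype.card {x : Fin (n+1) // x ≠ 0} = Module.finrank ℝ (Fin n → ℝ) := by
      simp [Fintype.card_subtype_compl, Module.finrank_fin_fun]
    have hspan : Submodule.span ℝ (Set.range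
        (fun i : {x : Fin (n+1) // x ≠ 0} => toR (v i) - toR (v 0))) = ⊤ :=
      hli.span_eq_top_of_card_eq_finrank' hcard
    have hagree : ∀ i : {x : Fin (n+1) // x ≠ 0},
        F₁ (toR (v i) - toR (v 0)) = F₂ (toR (v i) - toR (v 0)) := by
      intro i
      have e₁ : ∀ k, F₁ (toR (v k)) = toR (w k) - (fun i => (t₁ i : ℝ)) := by
        intro k
        have h : (fun i => (∑ j, (M₁ i j : ℝ) * toR (v k) j) + (t₁ i : ℝ)) = toR (w k) :=
          (hγ₁ (toR (v k))).symm.trans (hfix₁ k)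
        funext i'
        have h' : (∑ j, (M₁ i' j : ℝ) * toR (v k) j) + (t₁ i' : ℝ) = toR (w k) i' :=
          congrFun h i'
        have h'' : F₁ (toR (v k)) i' = ∑ j, (M₁ i' j : ℝ) * toR (v k) j :=
          congrFun (hF₁x (toR (v k))) i'
        simp only [Pi.sub_apply]
        rw [h'']
        linarith
      have e₂ : ∀ k, F₂ (toR (v k)) = toR (w k) - (fun i => (t i : ℝ)) := by
        intro k
        have h : (fun i => (∑ j, (M i j : ℝ) * toR (v k) j) + (t i : ℝ)) = toR (w k) :=
          hfix k
        funext i'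
        have h' : (∑ j, (M i' j : ℝ) * toR (v k) j) + (t i' : ℝ) = toR (w k) i' :=
          congrFun h i'
        have h'' : F₂ (toR (v k)) i' = ∑ j, (M i' j : ℝ) * toR (v k) j :=
          congrFun (hF₂x (toR (v k))) i'
        simp only [Pi.sub_apply]
        rw [h'']
        linarith
      rw [map_sub, map_sub, e₁, e₁, e₂, e₂]
      abel
    have hFeq : F₁ = F₂ := LinearMap.ext_on_range hspan hagree
    have hFeq' : ∀ (x : Fin n → ℝ) (i : Fin n),
        (∑ j, (M₁ i j : ℝ) * x j) = ∑ j, (M i j : ℝ) * x j := by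
      intro x i
      have h3 : F₁ x = F₂ x := by rw [hFeq]
      have h4 : (∑ j, (M₁ i j : ℝ) * x j) = F₁ x i := (congrFun (hF₁x x) i).symm
      have h5 : F₂ x i = ∑ j, (M i j : ℝ) * x j := congrFun (hF₂x x) i
      rw [h4, h3, h5]
    have ht : ∀ i, (t₁ i : ℝ) = (t i : ℝ) := by
      intro i
      have h1 : (∑ j, (M₁ i j : ℝ) * toR (v 0) j) + (t₁ i : ℝ) = toR (w 0) i :=
        congrFun ((hγ₁ (toR (v 0))).symm.trans (hfix₁ 0)) i
      have h2 : (∑ j, (M i j : ℝ) * toR (v 0) j) + (t i : ℝ) = toR (w 0) i :=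
        congrFun (hfix 0) i
      have h3 := hFeq' (toR (v 0)) i
      linarith
    funext x
    rw [hγ₁]
    funext i
    rw [hFeq' x i, ht i]
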